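/- Assume SO(n,k,β) is friendly. Let k̄ be an algebraic closure of k and let A ∈ GL(n, k̄) be such that for every X ∈ SO(n,k,β) there exists X' ∈ SO(n,k,β) with A⁻¹·ι(X)·A = ι(X'). Then there is a nonzero α ∈ k̄ with Aᵀ·M̄·A = α·M̄ (i.e., A lies in the group of similitudes GO(n,k̄,β)), and there is a nonzero p ∈ k̄ with p² = α such that the matrix à = p⁻¹·A satisfies Ãᵀ·M̄·Ã = M̄; moreover, when n is odd, p can be chosen so that in addition det à = 1. -/

import Mathlib

open Matrix

section RotAux
variable {R₀ : Type*} [CommRing R₀] {n : ℕ}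

/-- A plane "rotation" matrix in the (s,t)-plane. -/
def rotAux (s t : Fin n) (x y b : R₀) : Matrix (Fin n) (Fin n) R₀ :=
  Matrix.of fun a j =>
    if j = s then (if a = s then x else if a = t then y else 0)
    else if j = t then (if a = s then b else if a = t then x else 0)
    else if a = j then 1 else 0

lemma sum_two_aux {s t : Fin n} (hst : s ≠ t) (f : Fin n → R₀)
    (hf : ∀ a, a ≠ s → a ≠ t → f a = 0) : ∑ a, f a = f s + f t := by
  rw [← Finset.sum_pair hst]
  exact (Finset.sum_subset (Finset.subset_univ _) (by
    intro a _ ha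
    simp only [Finset.mem_insert, Finset.mem_singleton, not_or] at ha
    exact hf a ha.1 ha.2)).symm

lemma rotAux_col {s t : Fin n} (hst : s ≠ t) (x y b : R₀) (g : Fin n → R₀) (j : Fin n) :
    ∑ a, g a * rotAux s t x y b a j =
      if j = s then g s * x + g t * y
      else if j = t then g s * b + g t * x else g j := by
  by_cases hjs : j = s
  · subst hjs
    rw [if_pos rfl, sum_two_aux hst _ (fun a has hat => by
      simp [rotAux, has, hat])]
    simp [rotAux, hst, Ne.symm hst]
  · by_cases hjt : j = t
    · subst hjt
      rw [if_neg hjs, if_pos rfl, sum_two_aux hst _ (fun a has hat => by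
        simp [rotAux, has, hat, Ne.symm hjs])]
      simp [rotAux, hst, Ne.symm hst]
    · rw [if_neg hjs, if_neg hjt]
      rw [Finset.sum_eq_single j (fun a _ ha => by simp [rotAux, hjs, hjt, ha]) (by simp)]
      simp [rotAux, hjs, hjt]

lemma rotAux_row {s t : Fin n} (hst : s ≠ t) (x y b : R₀) (g : Fin n → R₀) (i : Fin n) :
    ∑ a, rotAux s t x y b i a * g a =
      if i = s then x * g s + b * g t
      else if i = t then y * g s + x * g t else g i := by
  by_cases his : i = s
  · subst his
    rw [if_pos rfl, sum_two_aux hst _ (fun a has hat => by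
      simp [rotAux, has, hat, Ne.symm has, Ne.symm hat])]
    simp [rotAux, hst, Ne.symm hst]
  · by_cases hit : i = t
    · subst hit
      rw [if_neg his, if_pos rfl, sum_two_aux hst _ (fun a has hat => by
        simp [rotAux, has, hat, Ne.symm has, Ne.symm hat, his])]
      simp [rotAux, hst, Ne.symm hst]
    · rw [if_neg his, if_neg hit]
      rw [Finset.sum_eq_single i (fun a _ ha => by
        simp [rotAux, his, hit, Ne.symm ha]) (by simp)]
      simp [rotAux, his, hit]

lemma rotAux_orth {s t : Fin n} (hst : s ≠ t) (x y b : R₀) (d : Fin n → R₀)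
    (h1 : d s * (x * x) + d t * (y * y) = d s)
    (h2 : d s * (b * b) + d t * (x * x) = d t)
    (h3 : d s * (x * b) + d t * (y * x) = 0) :
    (rotAux s t x y b)ᵀ * diagonal d * rotAux s t x y b = diagonal d := by
  ext i j
  rw [Matrix.mul_apply]
  simp only [Matrix.mul_diagonal, transpose_apply]
  rw [rotAux_col hst x y b (fun a => rotAux s t x y b a i * d a) j]
  simp only [rotAux, of_apply, Matrix.diagonal_apply]
  split_ifs <;> (try subst_vars) <;> (try (exact absurd rfl hst)) <;> (try contradiction) <;>
    (try first
      | rfl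
      | linear_combination h1
      | linear_combination h2
      | linear_combination h3
      | ring
      | simp_all)

lemma updateRow_comm_aux {s t : Fin n} (hst : s ≠ t) (M : Matrix (Fin n) (Fin n) R₀)
    (u v : Fin n → R₀) :
    updateRow (updateRow M s u) t v = updateRow (updateRow M t v) s u := by
  ext i j
  by_cases hit : i = t
  · subst hit
    rw [updateRow_self, updateRow_ne (Ne.symm hst), updateRow_self]
  · rw [updateRow_ne hit]
    by_cases his : i = s
    · subst his; rw [updateRow_self, updateRow_self]
    · rw [updateRow_ne his, updateRow_ne his, updateRow_ne hit]

lemma rotAux_eq_updateRow {s t : Fin n} (hst : s ≠ t) (x y b : R₀) :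
    rotAux s t x y b =
      updateRow (updateRow (1 : Matrix (Fin n) (Fin n) R₀) s
          (x • (1 : Matrix (Fin n) (Fin n) R₀) s + b • (1 : Matrix (Fin n) (Fin n) R₀) t)) t
        (y • (1 : Matrix (Fin n) (Fin n) R₀) s + x • (1 : Matrix (Fin n) (Fin n) R₀) t) := by
  ext i j
  by_cases hit : i = t
  · subst hit
    rw [updateRow_self]
    simp [rotAux, one_apply, hst, Ne.symm hst]
    split_ifs <;> (try subst_vars) <;> (try contradiction) <;> first | rfl | ring | simp_all
  · rw [updateRow_ne hit]
    by_cases his : i = s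
    · subst his
      rw [updateRow_self]
      simp [rotAux, one_apply, hst, Ne.symm hst]
      split_ifs <;> (try subst_vars) <;> (try contradiction) <;> first | rfl | ring | simp_all
    · rw [updateRow_ne his]
      simp only [rotAux, of_apply, one_apply]
      split_ifs <;> (try subst_vars) <;> (try contradiction) <;> first | rfl | ring | simp_all

lemma rotAux_det {s t : Fin n} (hst : s ≠ t) (x y b : R₀) :
    (rotAux s t x y b).det = x * x - b * y := by
  classical
  set es : Fin n → R₀ := (1 : Matrix (Fin n) (Fin n) R₀) s with hes
  set et : Fin n → R₀ := (1 : Matrix (Fin n) (Fin n) R₀) t with het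
  have h1 : (1 : Matrix (Fin n) (Fin n) R₀) = updateRow 1 s es := by
    rw [hes, updateRow_eq_self]
  rw [rotAux_eq_updateRow hst]
  rw [det_updateRow_add, det_updateRow_smul, det_updateRow_smul]
  -- second term: updateRow Q t et = Q
  have hQt : (updateRow (1 : Matrix (Fin n) (Fin n) R₀) s (x • es + b • et)) t = et := by
    rw [updateRow_ne (Ne.symm hst)]
  have hQteq : updateRow (updateRow (1 : Matrix (Fin n) (Fin n) R₀) s (x • es + b • et)) t et =
      updateRow (1 : Matrix (Fin n) (Fin n) R₀) s (x • es + b • et) := by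
    have h := updateRow_eq_self (updateRow (1 : Matrix (Fin n) (Fin n) R₀) s (x • es + b • et)) t
    rwa [hQt] at h
  rw [hQteq]
  rw [det_updateRow_add, det_updateRow_smul, det_updateRow_smul]
  rw [← h1, det_one]
  have hdet0 : (updateRow (1 : Matrix (Fin n) (Fin n) R₀) s et).det = 0 := by
    apply det_zero_of_row_eq hst
    rw [updateRow_self, updateRow_ne (Ne.symm hst)]
  rw [hdet0]
  -- first term
  rw [updateRow_comm_aux hst, det_updateRow_add, det_updateRow_smul, det_updateRow_smul]
  have hdet0' : (updateRow (updateRow (1 : Matrix (Fin n) (Fin n) R₀) t es) s es).det = 0 := by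
    apply det_zero_of_row_eq hst
    rw [updateRow_self, updateRow_ne (Ne.symm hst), updateRow_self]
  rw [hdet0']
  have hswap : updateRow (updateRow (1 : Matrix (Fin n) (Fin n) R₀) t es) s et =
      (1 : Matrix (Fin n) (Fin n) R₀).submatrix (Equiv.swap s t) id := by
    ext i j
    rw [submatrix_apply, id_eq]
    by_cases his : i = s
    · subst his; rw [updateRow_self, Equiv.swap_apply_left, het]
    · rw [updateRow_ne his]
      by_cases hit : i = t
      · subst hit; rw [updateRow_self, Equiv.swap_apply_right, hes]
      · rw [updateRow_ne hit, Equiv.swap_apply_of_ne_of_ne his hit]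
  rw [hswap, det_permute, det_one, Equiv.Perm.sign_swap hst]
  simp only [Units.val_neg, Units.val_one, Int.cast_neg, Int.cast_one]
  ring

lemma rotAux_map {S : Type*} [CommRing S] (φ : R₀ →+* S) (s t : Fin n) (x y b : R₀) :
    (rotAux s t x y b).map φ = rotAux s t (φ x) (φ y) (φ b) := by
  ext i j
  simp only [rotAux, Matrix.map_apply, Matrix.of_apply]
  split_ifs <;> simp

end RotAux

/-- If `Inn_A` (with `A ∈ GL(n, k̄)`) leaves `SO(n,k,β)` invariant, then `A` is a
similitude of `β`, and a suitable scalar multiple `p⁻¹ • A` is orthogonal; when `n`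
is odd, `p` may moreover be chosen so that `det (p⁻¹ • A) = 1`. -/
theorem inn_invariant_so_similitude {k K : Type*} [Field k] [Field K] [Algebra k K]
    [IsAlgClosure k K]
    (hchar : (2 : k) ≠ 0) {n : ℕ} (hn : 2 < n)
    (M : Matrix (Fin n) (Fin n) k) (hMdiag : M.IsDiag) (hM : IsUnit M)
    (hfriendly : ∀ s t : Fin n, ∃ x y : k, y ≠ 0 ∧ x ^ 2 + (M s s / M t t) * y ^ 2 = 1)
    (A : Matrix (Fin n) (Fin n) K) (hA : IsUnit A)
    (hinv : ∀ X : Matrix (Fin n) (Fin n) k, Xᵀ * M * X = M → X.det = 1 →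
      ∃ X' : Matrix (Fin n) (Fin n) k, X'ᵀ * M * X' = M ∧ X'.det = 1 ∧
        A⁻¹ * X.map (algebraMap k K) * A = X'.map (algebraMap k K)) :
    ∃ α : K, α ≠ 0 ∧
      Aᵀ * M.map (algebraMap k K) * A = α • M.map (algebraMap k K) ∧
      ∃ p : K, p ≠ 0 ∧ p ^ 2 = α ∧
        (p⁻¹ • A)ᵀ * M.map (algebraMap k K) * (p⁻¹ • A) = M.map (algebraMap k K) ∧
        (Odd n → (p⁻¹ • A).det = 1) := by
  classical
  set φ := algebraMap k K with hφdef
  have hφ : Function.Injective φ := (algebraMap k K).injective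
  set Mb : Matrix (Fin n) (Fin n) K := M.map φ with hMbdef
  have hMdet : M.det ≠ 0 := ((Matrix.isUnit_iff_isUnit_det M).mp hM).ne_zero
  have hdiag : Matrix.diagonal M.diag = M := hMdiag.diagonal_diag
  have hdnz : ∀ i, M i i ≠ 0 := by
    intro i hi
    apply hMdet
    rw [← hdiag, det_diagonal]
    exact Finset.prod_eq_zero (Finset.mem_univ i) hi
  have hdetmap : ∀ Z : Matrix (Fin n) (Fin n) k, (Z.map φ).det = φ Z.det := by
    intro Z
    rw [← RingHom.mapMatrix_apply, ← RingHom.map_det]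
  have hMbdet : Mb.det ≠ 0 := by
    rw [hMbdef, hdetmap]
    exact fun h => hMdet (hφ (h.trans (map_zero φ).symm))
  have hMbu : IsUnit Mb.det := isUnit_iff_ne_zero.mpr hMbdet
  have hAdet : IsUnit A.det := (Matrix.isUnit_iff_isUnit_det A).mp hA
  have hATdet : IsUnit Aᵀ.det := by rwa [det_transpose]
  have h2K : (2 : K) ≠ 0 := by
    intro h
    apply hchar
    apply hφ
    rw [map_zero, map_ofNat]
    exact h
  set Bmx : Matrix (Fin n) (Fin n) K := Mb⁻¹ * (Aᵀ⁻¹ * (Mb * A⁻¹)) with hBmxdef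
  -- commuting property
  have hcomm : ∀ X : Matrix (Fin n) (Fin n) k, Xᵀ * M * X = M → X.det = 1 →
      Bmx * X.map φ = X.map φ * Bmx := by
    intro X hX hXdet
    obtain ⟨X', hX', hX'det, heq⟩ := hinv X hX hXdet
    set Y : Matrix (Fin n) (Fin n) K := X.map φ with hYdef
    have hYdet1 : Y.det = 1 := by
      rw [hYdef, hdetmap, hXdet, _root_.map_one]
    have hYd : IsUnit Y.det := by rw [hYdet1]; exact isUnit_one
    have hYTd : IsUnit Yᵀ.det := by rwa [det_transpose]
    have hYorth : Yᵀ * Mb * Y = Mb := by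
      have h := congrArg (fun Z : Matrix (Fin n) (Fin n) k => Z.map φ) hX
      simp only [Matrix.map_mul] at h
      rw [Matrix.transpose_map] at h
      exact h
    have hY'orth : (X'.map φ)ᵀ * Mb * (X'.map φ) = Mb := by
      have h := congrArg (fun Z : Matrix (Fin n) (Fin n) k => Z.map φ) hX'
      simp only [Matrix.map_mul] at h
      rw [Matrix.transpose_map] at h
      exact h
    have e0 : (A⁻¹ * Y * A)ᵀ * Mb * (A⁻¹ * Y * A) = Mb := by rw [heq]; exact hY'orth
    rw [transpose_mul, transpose_mul, transpose_nonsing_inv] at e0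
    have e2 : Yᵀ * (Aᵀ⁻¹ * (Mb * A⁻¹)) * Y = Aᵀ⁻¹ * (Mb * A⁻¹) := by
      have h := congrArg (fun Z => Aᵀ⁻¹ * Z * A⁻¹) e0
      simp only [Matrix.mul_assoc] at h ⊢
      rw [Matrix.nonsing_inv_mul_cancel_left _ _ hATdet, Matrix.mul_nonsing_inv _ hAdet,
        Matrix.mul_one] at h
      exact h
    have hMbinv : Mb⁻¹ = Y⁻¹ * (Mb⁻¹ * Yᵀ⁻¹) := by
      conv_lhs => rw [← hYorth]
      rw [Matrix.mul_inv_rev, Matrix.mul_inv_rev]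
    symm
    calc Y * Bmx = Y * (Y⁻¹ * (Mb⁻¹ * Yᵀ⁻¹ * (Aᵀ⁻¹ * (Mb * A⁻¹)))) := by
          rw [hBmxdef]
          conv_lhs => rw [hMbinv]
          simp only [Matrix.mul_assoc]
      _ = Mb⁻¹ * (Yᵀ⁻¹ * (Aᵀ⁻¹ * (Mb * A⁻¹))) := by
          rw [Matrix.mul_nonsing_inv_cancel_left _ _ hYd]
          simp only [Matrix.mul_assoc]
      _ = Mb⁻¹ * (Yᵀ⁻¹ * (Yᵀ * (Aᵀ⁻¹ * (Mb * A⁻¹) * Y))) := by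
          conv_lhs => rw [← e2]
          simp only [Matrix.mul_assoc]
      _ = Bmx * Y := by
          rw [Matrix.nonsing_inv_mul_cancel_left _ _ hYTd, hBmxdef]
          simp only [Matrix.mul_assoc]
  -- pair data
  have pairdata : ∀ s t : Fin n, s ≠ t → ∃ x y : k, y ≠ 0 ∧ x ≠ 1 ∧
      x ^ 2 + (M t t / M s s) * y ^ 2 = 1 ∧
      Bmx * rotAux s t (φ x) (φ y) (-(φ (M t t / M s s) * φ y))
        = rotAux s t (φ x) (φ y) (-(φ (M t t / M s s) * φ y)) * Bmx := by
    intro s t hst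
    obtain ⟨x, y, hy, hxy⟩ := hfriendly t s
    have hMs := hdnz s
    have hMt := hdnz t
    have hr : M t t / M s s ≠ 0 := div_ne_zero hMt hMs
    have hx1 : x ≠ 1 := by
      intro h
      subst h
      apply hy
      have : (M t t / M s s) * y ^ 2 = 0 := by linear_combination hxy
      rcases mul_eq_zero.mp this with h' | h'
      · exact absurd h' hr
      · exact pow_eq_zero_iff (n := 2) (by norm_num) |>.mp h'
    refine ⟨x, y, hy, hx1, hxy, ?_⟩
    have hb : φ (-(M t t / M s s) * y) = -(φ (M t t / M s s) * φ y) := by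
      rw [_root_.map_mul, map_neg, neg_mul]
    rw [← hb, ← rotAux_map]
    apply hcomm
    · rw [← hdiag]
      have hxy' : M s s * x ^ 2 + M t t * y ^ 2 = M s s := by
        field_simp at hxy
        linear_combination hxy
      apply rotAux_orth hst
      · simp only [Matrix.diag_apply]
        linear_combination hxy'
      · simp only [Matrix.diag_apply, Matrix.diagonal_apply_eq]
        field_simp
        linear_combination hxy'
      · simp only [Matrix.diag_apply, Matrix.diagonal_apply_eq]
        field_simp
        ring
    · rw [rotAux_det hst]
      linear_combination hxy
  -- off-diagonal entries vanish
  have hexu : ∀ i j : Fin n, ∃ u : Fin n, u ≠ i ∧ u ≠ j := by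
    intro i j
    by_contra h
    push_neg at h
    have hsub : (Finset.univ : Finset (Fin n)) ⊆ {i, j} := by
      intro u _
      simp only [Finset.mem_insert, Finset.mem_singleton]
      rcases eq_or_ne u i with h' | h'
      · exact Or.inl h'
      · exact Or.inr (h u h')
    have h1 := Finset.card_le_card hsub
    have h2 : ({i, j} : Finset (Fin n)).card ≤ 2 := by
      refine le_trans (Finset.card_insert_le _ _) ?_
      simp
    rw [Finset.card_univ, Fintype.card_fin] at h1
    omega
  have hoff : ∀ i j : Fin n, i ≠ j → Bmx i j = 0 := by
    intro i j hij
    obtain ⟨u, hui, huj⟩ := hexu i j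
    obtain ⟨x, y, hy, hx1, hxy, hBR⟩ := pairdata j u (Ne.symm huj)
    set X := φ x with hX
    set Y := φ y with hY
    set r := φ (M u u / M j j) with hr
    have hYne : Y ≠ 0 := fun h => hy (hφ (h.trans (map_zero φ).symm))
    have hXne : X ≠ 1 := fun h => hx1 (hφ (h.trans (map_one φ).symm))
    have hrelK : X ^ 2 + r * Y ^ 2 = 1 := by
      have h := congrArg φ hxy
      simp only [map_add, map_pow, _root_.map_mul, _root_.map_one] at h
      exact h
    have e1 : (Bmx * rotAux j u X Y (-(r * Y))) i j
        = (rotAux j u X Y (-(r * Y)) * Bmx) i j := by rw [hBR]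
    have e2 : (Bmx * rotAux j u X Y (-(r * Y))) i u
        = (rotAux j u X Y (-(r * Y)) * Bmx) i u := by rw [hBR]
    rw [Matrix.mul_apply, Matrix.mul_apply,
      rotAux_col (Ne.symm huj) X Y (-(r * Y)) (fun a => Bmx i a) j,
      rotAux_row (Ne.symm huj) X Y (-(r * Y)) (fun a => Bmx a j) i] at e1
    rw [Matrix.mul_apply, Matrix.mul_apply,
      rotAux_col (Ne.symm huj) X Y (-(r * Y)) (fun a => Bmx i a) u,
      rotAux_row (Ne.symm huj) X Y (-(r * Y)) (fun a => Bmx a u) i] at e2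
    simp only [eq_self_iff_true, if_true, if_pos rfl, if_neg hij, if_neg (Ne.symm hui),
      if_neg huj] at e1 e2
    have key : Bmx i j * (2 * (1 - X)) = 0 := by
      linear_combination (-(1 - X)) * e1 + (-Y) * e2 + (-(Bmx i j)) * hrelK
    rcases mul_eq_zero.mp key with h | h
    · exact h
    · exact absurd h (mul_ne_zero h2K (sub_ne_zero.mpr (Ne.symm hXne)))
  -- diagonal entries equal
  have hdiagB : ∀ s t : Fin n, Bmx s s = Bmx t t := by
    intro s t
    rcases eq_or_ne s t with hst | hst
    · rw [hst]
    obtain ⟨x, y, hy, hx1, hxy, hBR⟩ := pairdata s t hst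
    set X := φ x
    set Y := φ y
    set r := φ (M t t / M s s)
    have hYne : Y ≠ 0 := fun h => hy (hφ (h.trans (map_zero φ).symm))
    have e1 : (Bmx * rotAux s t X Y (-(r * Y))) t s
        = (rotAux s t X Y (-(r * Y)) * Bmx) t s := by rw [hBR]
    rw [Matrix.mul_apply, Matrix.mul_apply,
      rotAux_col hst X Y (-(r * Y)) (fun a => Bmx t a) s,
      rotAux_row hst X Y (-(r * Y)) (fun a => Bmx a s) t] at e1
    simp only [eq_self_iff_true, if_true, if_pos rfl, if_neg hst, if_neg (Ne.symm hst)] at e1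
    rw [hoff t s (Ne.symm hst)] at e1
    -- e1 : 0 * X + Bmx t t * Y = Y * Bmx s s + X * 0
    have : Bmx t t * Y = Bmx s s * Y := by linear_combination e1
    exact (mul_right_cancel₀ hYne this).symm
  -- Bmx is scalar
  have e0 : Fin n := ⟨0, by omega⟩
  set β : K := Bmx e0 e0 with hβdef
  have hBscal : Bmx = β • (1 : Matrix (Fin n) (Fin n) K) := by
    ext i j
    rcases eq_or_ne i j with hij | hij
    · rw [hij]
      rw [Matrix.smul_apply, Matrix.one_apply_eq, smul_eq_mul, mul_one]
      exact hdiagB j e0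
    · rw [Matrix.smul_apply, Matrix.one_apply_ne hij, smul_eq_mul, mul_zero]
      exact hoff i j hij
  have hMA : Aᵀ⁻¹ * (Mb * A⁻¹) = β • Mb := by
    have h := congrArg (fun Z => Mb * Z) hBscal
    simp only [hBmxdef] at h
    rw [Matrix.mul_nonsing_inv_cancel_left _ _ hMbu] at h
    rw [h, Matrix.mul_smul, Matrix.mul_one]
  have hMb_eq : Mb = β • (Aᵀ * (Mb * A)) := by
    have h := congrArg (fun Z => Aᵀ * (Z * A)) hMA
    simp only [Matrix.mul_assoc] at h
    rw [Matrix.mul_nonsing_inv_cancel_left _ _ hATdet] at h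
    rw [Matrix.nonsing_inv_mul _ hAdet, Matrix.mul_one] at h
    conv_lhs => rw [h]
    rw [smul_mul_assoc, mul_smul_comm]
  have hβ : β ≠ 0 := by
    intro h0
    rw [h0, zero_smul] at hMb_eq
    apply hMbdet
    haveI : Nonempty (Fin n) := ⟨e0⟩
    rw [hMb_eq, Matrix.det_zero]
  set α : K := β⁻¹ with hαdef
  have hα : α ≠ 0 := inv_ne_zero hβ
  have hsim : Aᵀ * Mb * A = α • Mb := by
    have h : α • Mb = α • (β • (Aᵀ * (Mb * A))) := by rw [← hMb_eq]
    rw [h, smul_smul, hαdef, inv_mul_cancel₀ hβ, one_smul, Matrix.mul_assoc]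
  haveI : IsAlgClosed K := IsAlgClosure.isAlgClosed k
  obtain ⟨p, hp2⟩ := IsAlgClosed.exists_pow_nat_eq α (n := 2) (by norm_num)
  have hp : p ≠ 0 := by
    intro h
    apply hα
    rw [← hp2, h]
    ring
  have horth : ∀ q : K, q ≠ 0 → q ^ 2 = α → (q⁻¹ • A)ᵀ * Mb * (q⁻¹ • A) = Mb := by
    intro q hq hq2
    have hsc : q⁻¹ * q⁻¹ * α = 1 := by
      rw [← hq2]
      field_simp
    rw [transpose_smul, smul_mul_assoc, smul_mul_assoc, mul_smul_comm, hsim, smul_smul,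
      smul_smul, hsc, one_smul]
  have hdet2 : ∀ q : K, q ≠ 0 → q ^ 2 = α → (q⁻¹ • A).det * (q⁻¹ • A).det = 1 := by
    intro q hq hq2
    have h := congrArg Matrix.det (horth q hq hq2)
    rw [det_mul, det_mul, det_transpose] at h
    have h' : (q⁻¹ • A).det * (q⁻¹ • A).det * Mb.det = 1 * Mb.det := by
      rw [one_mul]
      linear_combination h
    exact mul_right_cancel₀ hMbdet h'
  refine ⟨α, hα, hsim, ?_⟩
  by_cases hodd : Odd n
  · by_cases hD : (p⁻¹ • A).det = 1
    · exact ⟨p, hp, hp2, horth p hp hp2, fun _ => hD⟩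
    · have hDD := hdet2 p hp hp2
      have hDneg : (p⁻¹ • A).det = -1 := by
        have hfac : ((p⁻¹ • A).det - 1) * ((p⁻¹ • A).det + 1) = 0 := by
          linear_combination hDD
        rcases mul_eq_zero.mp hfac with h | h
        · exact absurd (sub_eq_zero.mp h) hD
        · exact eq_neg_of_add_eq_zero_left h
      have hnegsmul : (-p)⁻¹ • A = -(p⁻¹ • A) := by rw [inv_neg, neg_smul]
      refine ⟨-p, neg_ne_zero.mpr hp, by rw [neg_pow]; simp [hp2], ?_, ?_⟩
      · rw [hnegsmul, transpose_neg]
        simp only [Matrix.neg_mul, Matrix.mul_neg, neg_neg]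
        exact horth p hp hp2
      · intro _
        rw [hnegsmul, Matrix.det_neg, Fintype.card_fin, hDneg, Odd.neg_one_pow hodd]
        ring
  · exact ⟨p, hp, hp2, horth p hp hp2, fun h => absurd h hodd⟩
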